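/- Smallwood–Sondik backup closure: let Γ be a nonempty finite set of vectors α : S → ℝ and let V : Δ → ℝ be given by V(b) = min_{α ∈ Γ} Σ_s α(s) · b(s). Then for every belief b ∈ Δ, (T V)(b) = min over pairs (a, g) with a ∈ A and g : O → Γ of Σ_s b s · ( c a s + β · Σ_o Σ_{s'} P a s s' · Q a s' o · (g o)(s') ). In particular, one Bellman backup of a pointwise minimum of finitely many linear functions of the belief is again a pointwise minimum of finitely many linear functions of the belief. -/

import Mathlib

open Finset

/-- A belief over a finite state space: a nonnegative function summing to one. -/
def IsBelief {S : Type} [Fintype S] (b : S → ℝ) : Prop :=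
  (∀ s, 0 ≤ b s) ∧ ∑ s, b s = 1

/-- The set of beliefs, as a subtype. -/
def Belief (S : Type) [Fintype S] : Type := {b : S → ℝ // IsBelief b}

/-- Probability of observation `o` under action `a` starting from belief `b`:
`σ(b,a,o) = Σ_s Σ_{s'} b s · P a s s' · Q a s' o`. -/
noncomputable def obsProb {S A O : Type} [Fintype S] [Fintype A] [Fintype O]
    (P : A → S → S → ℝ) (Q : A → S → O → ℝ) (b : Belief S) (a : A) (o : O) : ℝ :=
  ∑ s, ∑ s', b.1 s * P a s s' * Q a s' o

/-- The Bayes posterior belief `τ(b,a,o)`; equal to the fixed belief `b₀` when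
`σ(b,a,o) = 0`. -/
noncomputable def bayesTau {S A O : Type} [Fintype S] [Fintype A] [Fintype O]
    (P : A → S → S → ℝ) (hP0 : ∀ a s s', 0 ≤ P a s s')
    (Q : A → S → O → ℝ) (hQ0 : ∀ a s' o, 0 ≤ Q a s' o)
    (b₀ : Belief S) (b : Belief S) (a : A) (o : O) : Belief S :=
  if h : 0 < obsProb P Q b a o then
    ⟨fun s' => (∑ s, b.1 s * P a s s' * Q a s' o) / obsProb P Q b a o, by
      constructor
      · intro s'
        apply div_nonneg _ (le_of_lt h)
        exact Finset.sum_nonneg fun s _ =>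
          mul_nonneg (mul_nonneg (b.2.1 s) (hP0 a s s')) (hQ0 a s' o)
      · rw [← Finset.sum_div, div_eq_one_iff_eq (ne_of_gt h), obsProb, Finset.sum_comm]⟩
  else b₀

/-- The coordinator's Bellman operator:
`(T V)(b) = min_a [ Σ_s b s · c a s + β · Σ_o σ(b,a,o) · V(τ(b,a,o)) ]`. -/
noncomputable def bellmanOp {S A O : Type} [Fintype S] [Fintype A] [Fintype O] [Nonempty A]
    (P : A → S → S → ℝ) (hP0 : ∀ a s s', 0 ≤ P a s s')
    (Q : A → S → O → ℝ) (hQ0 : ∀ a s' o, 0 ≤ Q a s' o)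
    (c : A → S → ℝ) (β : ℝ) (b₀ : Belief S)
    (V : Belief S → ℝ) (b : Belief S) : ℝ :=
  Finset.univ.inf' Finset.univ_nonempty fun a =>
    (∑ s, b.1 s * c a s) +
      β * ∑ o, obsProb P Q b a o * V (bayesTau P hP0 Q hQ0 b₀ b a o)



lemma my_mul_inf' {ι : Type*} (s : Finset ι) (h : s.Nonempty) (f : ι → ℝ) {c : ℝ} (hc : 0 ≤ c) :
    c * s.inf' h f = s.inf' h fun i => c * f i := by
  apply le_antisymm
  · exact Finset.le_inf' h _ fun i hi => mul_le_mul_of_nonneg_left (Finset.inf'_le f hi) hc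
  · obtain ⟨i, hi, hfi⟩ := s.exists_mem_eq_inf' h f
    calc s.inf' h (fun i => c * f i) ≤ c * f i := Finset.inf'_le _ hi
    _ = c * s.inf' h f := by rw [hfi]

lemma my_add_inf' {ι : Type*} (s : Finset ι) (h : s.Nonempty) (f : ι → ℝ) (d : ℝ) :
    d + s.inf' h f = s.inf' h fun i => d + f i := by
  apply le_antisymm
  · exact Finset.le_inf' h _ fun i hi => by
      have := Finset.inf'_le f hi; linarith
  · obtain ⟨i, hi, hfi⟩ := s.exists_mem_eq_inf' h f
    calc s.inf' h (fun i => d + f i) ≤ d + f i := Finset.inf'_le _ hi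
    _ = d + s.inf' h f := by rw [hfi]

lemma my_inf'_attach {ι : Type*} (s : Finset ι) (h : s.Nonempty) (f : ι → ℝ) :
    haveI : Nonempty {x : ι // x ∈ s} := h.to_subtype
    (Finset.univ : Finset {x : ι // x ∈ s}).inf' Finset.univ_nonempty (fun x => f x.1)
      = s.inf' h f := by
  haveI : Nonempty {x : ι // x ∈ s} := h.to_subtype
  apply le_antisymm
  · obtain ⟨i, hi, hfi⟩ := s.exists_mem_eq_inf' h f
    rw [hfi]
    exact Finset.inf'_le _ (Finset.mem_univ (⟨i, hi⟩ : {x // x ∈ s}))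
  · exact Finset.le_inf' _ _ fun x _ => Finset.inf'_le f x.2

lemma my_sum_inf' {O ι : Type*} [Fintype O] [DecidableEq O] [Fintype ι] [Nonempty ι]
    (f : O → ι → ℝ) :
    ∑ o, Finset.univ.inf' Finset.univ_nonempty (f o)
      = (Finset.univ : Finset (O → ι)).inf' Finset.univ_nonempty fun g => ∑ o, f o (g o) := by
  apply le_antisymm
  · apply Finset.le_inf'
    intro g _
    exact Finset.sum_le_sum fun o _ => Finset.inf'_le _ (Finset.mem_univ (g o))
  · have h : ∀ o : O, ∃ i : ι, Finset.univ.inf' Finset.univ_nonempty (f o) = f o i := by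
      intro o
      obtain ⟨i, _, hi⟩ := Finset.exists_mem_eq_inf' (Finset.univ_nonempty) (f o)
      exact ⟨i, hi⟩
    choose g hg using h
    calc (Finset.univ : Finset (O → ι)).inf' Finset.univ_nonempty (fun g => ∑ o, f o (g o))
        ≤ ∑ o, f o (g o) := Finset.inf'_le _ (Finset.mem_univ g)
      _ = ∑ o, Finset.univ.inf' Finset.univ_nonempty (f o) := by
          exact Finset.sum_congr rfl fun o _ => (hg o).symm

lemma my_inf'_prod {A G : Type*} [Fintype A] [Fintype G] [Nonempty A] [Nonempty G]
    (f : A → G → ℝ) :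
    (Finset.univ : Finset (A × G)).inf' Finset.univ_nonempty (fun p => f p.1 p.2)
      = Finset.univ.inf' Finset.univ_nonempty fun a =>
          Finset.univ.inf' Finset.univ_nonempty fun g => f a g := by
  apply le_antisymm
  · apply Finset.le_inf'; intro a _
    apply Finset.le_inf'; intro g _
    exact Finset.inf'_le _ (Finset.mem_univ (a, g))
  · apply Finset.le_inf'; intro p _
    calc Finset.univ.inf' Finset.univ_nonempty
          (fun a => Finset.univ.inf' Finset.univ_nonempty fun g => f a g)
        ≤ Finset.univ.inf' Finset.univ_nonempty fun g => f p.1 g :=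
          Finset.inf'_le _ (Finset.mem_univ p.1)
      _ ≤ f p.1 p.2 := Finset.inf'_le _ (Finset.mem_univ p.2)


set_option maxHeartbeats 1000000 in
/-- Smallwood–Sondik backup closure: one Bellman backup of a pointwise minimum of
finitely many linear functions of the belief is again a pointwise minimum of finitely
many linear functions of the belief, indexed by pairs `(a, g)` with `a ∈ A` and
`g : O → Γ`. -/
theorem smallwood_sondik_backup {S A O : Type} [Fintype S] [Fintype A] [Fintype O]
    [Nonempty S] [Nonempty A] [Nonempty O]
    (P : A → S → S → ℝ) (hP0 : ∀ a s s', 0 ≤ P a s s')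
    (hP1 : ∀ a s, ∑ s', P a s s' = 1)
    (Q : A → S → O → ℝ) (hQ0 : ∀ a s' o, 0 ≤ Q a s' o)
    (hQ1 : ∀ a s', ∑ o, Q a s' o = 1)
    (c : A → S → ℝ) (β : ℝ) (hβ0 : 0 ≤ β) (hβ1 : β < 1) (b₀ : Belief S)
    (Γ : Finset (S → ℝ)) (hΓ : Γ.Nonempty) :
    ∀ b : Belief S,
      bellmanOp P hP0 Q hQ0 c β b₀
          (fun b' : Belief S => Γ.inf' hΓ fun α : S → ℝ => ∑ s, α s * b'.1 s) b =
        haveI := Classical.decEq O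
        haveI : Nonempty {α : S → ℝ // α ∈ Γ} := hΓ.to_subtype
        (Finset.univ : Finset (A × (O → {α : S → ℝ // α ∈ Γ}))).inf'
          Finset.univ_nonempty fun p =>
            ∑ s, b.1 s *
              (c p.1 s + β * ∑ o, ∑ s', P p.1 s s' * Q p.1 s' o * (p.2 o).1 s') := by
  intro b
  letI := Classical.decEq O
  haveI : Nonempty {α : S → ℝ // α ∈ Γ} := hΓ.to_subtype
  refine Eq.trans ?_ (my_inf'_prod (fun (a : A) (g : O → {α : S → ℝ // α ∈ Γ}) =>
    ∑ s, b.1 s * (c a s + β * ∑ o, ∑ s', P a s s' * Q a s' o * (g o).1 s'))).symm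
  unfold bellmanOp
  refine Finset.inf'_congr _ rfl fun a _ => ?_
  -- abbreviation for the unnormalized posterior weight
  have hw0 : ∀ o s', 0 ≤ ∑ s, b.1 s * P a s s' * Q a s' o := fun o s' =>
    Finset.sum_nonneg fun s _ =>
      mul_nonneg (mul_nonneg (b.2.1 s) (hP0 a s s')) (hQ0 a s' o)
  have hσw : ∀ o, obsProb P Q b a o = ∑ s', ∑ s, b.1 s * P a s s' * Q a s' o := fun o =>
    Finset.sum_comm
  -- Step A: σ · V(τ) is the min of linear functionals
  have key : ∀ o, obsProb P Q b a o *
      (Γ.inf' hΓ fun α : S → ℝ => ∑ s, α s * (bayesTau P hP0 Q hQ0 b₀ b a o).1 s)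
        = Γ.inf' hΓ fun α : S → ℝ => ∑ s', (∑ s, b.1 s * P a s s' * Q a s' o) * α s' := by
    intro o
    by_cases h : 0 < obsProb P Q b a o
    · rw [my_mul_inf' Γ hΓ _ h.le]
      refine Finset.inf'_congr _ rfl fun α _ => ?_
      have hτ : (bayesTau P hP0 Q hQ0 b₀ b a o).1 = fun s' =>
          (∑ s, b.1 s * P a s s' * Q a s' o) / obsProb P Q b a o :=
        congrArg (fun x : Belief S => x.1) (dif_pos h)
      rw [hτ, Finset.mul_sum]
      refine Finset.sum_congr rfl fun s' _ => ?_
      have hne : obsProb P Q b a o ≠ 0 := ne_of_gt h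
      field_simp
      ring_nf
      congr 1
      exact Finset.sum_congr rfl fun x _ => by ring
    · have hσ0 : obsProb P Q b a o = 0 := by
        refine le_antisymm (not_lt.1 h) ?_
        rw [hσw o]
        exact Finset.sum_nonneg fun s' _ => hw0 o s'
      have hweach : ∀ s' ∈ (Finset.univ : Finset S),
          (∑ s, b.1 s * P a s s' * Q a s' o) = 0 := by
        rw [← Finset.sum_eq_zero_iff_of_nonneg fun s' _ => hw0 o s']
        rw [← hσw o]; exact hσ0
      rw [hσ0, zero_mul]
      symm
      have : ∀ α ∈ Γ, (∑ s', (∑ s, b.1 s * P a s s' * Q a s' o) * α s') = (0 : ℝ) := by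
        intro α _
        refine Finset.sum_eq_zero fun s' _ => ?_
        rw [hweach s' (Finset.mem_univ s'), zero_mul]
      rw [Finset.inf'_congr _ rfl this]
      exact Finset.inf'_const hΓ 0
  rw [Finset.sum_congr rfl fun o _ => key o]
  have hattach : ∀ o, (Γ.inf' hΓ fun α : S → ℝ =>
        ∑ s', (∑ s, b.1 s * P a s s' * Q a s' o) * α s')
      = (Finset.univ : Finset {α : S → ℝ // α ∈ Γ}).inf' Finset.univ_nonempty
          (fun x => ∑ s', (∑ s, b.1 s * P a s s' * Q a s' o) * x.1 s') := fun o =>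
    (my_inf'_attach Γ hΓ _).symm
  rw [Finset.sum_congr rfl fun o _ => hattach o, my_sum_inf', my_mul_inf' _ _ _ hβ0,
    my_add_inf']
  refine Finset.inf'_congr _ rfl fun g _ => ?_
  have hexch : ∀ α : O → S → ℝ,
      ∑ o, ∑ s', (∑ s, b.1 s * P a s s' * Q a s' o) * α o s'
        = ∑ s, b.1 s * ∑ o, ∑ s', P a s s' * Q a s' o * α o s' := by
    intro α
    simp only [Finset.sum_mul, Finset.mul_sum]
    rw [show (∑ o, ∑ s', ∑ s, b.1 s * P a s s' * Q a s' o * α o s')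
        = ∑ o, ∑ s, ∑ s', b.1 s * P a s s' * Q a s' o * α o s' from
        Finset.sum_congr rfl fun o _ => Finset.sum_comm, Finset.sum_comm]
    exact Finset.sum_congr rfl fun s _ => Finset.sum_congr rfl fun o _ =>
      Finset.sum_congr rfl fun s' _ => by ring
  rw [hexch fun o => (g o).1]
  simp only [mul_add, Finset.sum_add_distrib]
  congr 1
  rw [Finset.mul_sum]
  exact Finset.sum_congr rfl fun s _ => by ring
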